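/- Let n ≥ 1 and p > 2 be real, and place n agents on the circle ℝ/pℤ in (weak) anticlockwise cyclic order. If each agent updates its position to the circular average (computed via the arc containing all its neighbours within distance 1, which has length ≤ 2 < p) of all agents within geodesic distance 1 of itself, then the updated positions are again in the same (weak) anticlockwise cyclic order; i.e., the Hegselmann-Krause update on the circle preserves the cyclic order of agents. -/

import Mathlib

/-- The lift of `y` modulo `p` lying in the window `[c - p/2, c + p/2)`,
i.e. the representative of `y` nearest to `c` (for `p > 0`). -/
noncomputable def nearestLift (p c y : ℝ) : ℝ :=
  c + (p * Int.fract ((y - c) / p + 1 / 2) - p / 2)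

/-- The neighbourhood of agent `i`: all agents within geodesic distance `1`
of `x i` on the circle of perimeter `p`. -/
noncomputable def hkNbhd (p : ℝ) {n : ℕ} (x : Fin n → ℝ) (i : Fin n) :
    Finset (Fin n) :=
  Finset.univ.filter fun j => |nearestLift p (x i) (x j) - x i| ≤ 1

/-- The Hegselmann-Krause update on the circle of perimeter `p`: agent `i`
moves to the average of its neighbours, computed via the arc of length `≤ 2`
centred at `x i` (each neighbour is represented by its lift nearest `x i`). -/
noncomputable def hkUpdate (p : ℝ) {n : ℕ} (x : Fin n → ℝ) (i : Fin n) : ℝ :=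
  (∑ j ∈ hkNbhd p x i, nearestLift p (x i) (x j)) / (hkNbhd p x i).card

namespace HKAux

lemma nearestLift_spec {p : ℝ} (hp : 0 < p) (c y : ℝ) :
    ∃ k : ℤ, nearestLift p c y = y + k * p ∧
      c - p / 2 ≤ nearestLift p c y ∧ nearestLift p c y < c + p / 2 := by
  refine ⟨-⌊(y - c) / p + 1 / 2⌋, ?_, ?_, ?_⟩
  · have hf : Int.fract ((y - c) / p + 1 / 2)
        = ((y - c) / p + 1 / 2) - ⌊(y - c) / p + 1 / 2⌋ := rfl
    have hpne : p ≠ 0 := hp.ne'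
    unfold nearestLift
    rw [hf]; push_cast; field_simp; ring
  · have := Int.fract_nonneg ((y - c) / p + 1 / 2)
    unfold nearestLift; nlinarith
  · have := Int.fract_lt_one ((y - c) / p + 1 / 2)
    unfold nearestLift; nlinarith

lemma nearestLift_eq_of {p : ℝ} (hp : 0 < p) {c y y' : ℝ} (k : ℤ)
    (hk : y' = y + k * p) (h1 : c - p / 2 ≤ y') (h2 : y' < c + p / 2) :
    nearestLift p c y = y' := by
  obtain ⟨k0, e, b1, b2⟩ := nearestLift_spec hp c y
  have hd : ((k - k0 : ℤ) : ℝ) * p = y' - nearestLift p c y := by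
    rw [hk, e]; push_cast; ring
  have h1' : ((k - k0 : ℤ) : ℝ) < 1 := by nlinarith
  have h2' : (-1 : ℝ) < ((k - k0 : ℤ) : ℝ) := by nlinarith
  have hk0 : k0 = k := by
    have e1 : (k - k0 : ℤ) < 1 := by exact_mod_cast h1'
    have e2 : (-1 : ℤ) < k - k0 := by exact_mod_cast h2'
    omega
  rw [e, hk0, hk]

variable {n : ℕ} (p : ℝ) (x : Fin n → ℝ)

def idx (hn : 0 < n) (m : ℤ) : Fin n :=
  ⟨(m % (n : ℤ)).toNat, by
    have h1 : 0 ≤ m % (n : ℤ) := Int.emod_nonneg m (by exact_mod_cast hn.ne')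
    have h2 : m % (n : ℤ) < n := Int.emod_lt_of_pos m (by exact_mod_cast hn)
    omega⟩

noncomputable def Xz (hn : 0 < n) (m : ℤ) : ℝ :=
  x (idx hn m) + ((m / (n : ℤ) : ℤ) : ℝ) * p

lemma idx_coe (hn : 0 < n) (i : Fin n) : idx hn (i : ℤ) = i := by
  have := i.isLt
  apply Fin.ext
  simp only [idx]
  rw [Int.emod_eq_of_lt (Int.natCast_nonneg _) (by exact_mod_cast i.isLt)]
  simp

lemma Xz_coe (hn : 0 < n) (i : Fin n) : Xz p x hn (i : ℤ) = x i := by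
  have h1 : ((i : ℤ)) / (n : ℤ) = 0 :=
    Int.ediv_eq_zero_of_lt (by positivity) (by exact_mod_cast i.isLt)
  rw [Xz, idx_coe, h1]
  simp

lemma idx_add_n (hn : 0 < n) (m : ℤ) : idx hn (m + n) = idx hn m := by
  apply Fin.ext
  have e1 : (m + (n : ℤ)) % n = m % n := by
    rw [show m + (n : ℤ) = m + (n : ℤ) * 1 by ring, Int.add_mul_emod_self_left]
  simp only [idx, e1]

lemma Xz_add_n (hn : 0 < n) (m : ℤ) : Xz p x hn (m + n) = Xz p x hn m + p := by
  have hne : (n : ℤ) ≠ 0 := by exact_mod_cast hn.ne'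
  have e2 : (m + (n : ℤ)) / n = m / n + 1 := by
    rw [show m + (n : ℤ) = m + 1 * (n : ℤ) by ring, Int.add_mul_ediv_right _ _ hne]
  simp only [Xz, idx_add_n, e2]
  rw [Int.cast_add, Int.cast_one]; ring

lemma Xz_mono (hn : 0 < n) (hmono : Monotone x)
    (hspan : x ⟨n - 1, by omega⟩ ≤ x ⟨0, hn⟩ + p) :
    Monotone (Xz p x hn) := by
  apply monotone_int_of_le_succ
  intro m
  have hne : (n : ℤ) ≠ 0 := by exact_mod_cast hn.ne'
  have h1 : 0 ≤ m % (n : ℤ) := Int.emod_nonneg m hne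
  have h2 : m % (n : ℤ) < n := Int.emod_lt_of_pos m (by exact_mod_cast hn)
  have hdm : (n : ℤ) * (m / n) + m % n = m := Int.mul_ediv_add_emod m n
  by_cases hc : m % (n : ℤ) = (n : ℤ) - 1
  · have hm1 : m + 1 = (n : ℤ) * (m / n + 1) := by rw [mul_add, mul_one]; linarith
    have e1 : (m + 1) % (n : ℤ) = 0 := by rw [hm1]; exact Int.mul_emod_right _ _
    have e2 : (m + 1) / (n : ℤ) = m / n + 1 := by
      rw [hm1]; exact Int.mul_ediv_cancel_left _ hne
    have ei : idx hn m = ⟨n - 1, by omega⟩ := by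
      apply Fin.ext; simp only [idx]; omega
    have ei2 : idx hn (m + 1) = ⟨0, hn⟩ := by
      apply Fin.ext; simp only [idx, e1]; rfl
    simp only [Xz, ei, ei2, e2]
    rw [Int.cast_add, Int.cast_one]
    linarith
  · have hm1 : m + 1 = (m % n + 1) + (n : ℤ) * (m / n) := by linarith
    have e1 : (m + 1) % (n : ℤ) = m % n + 1 := by
      rw [hm1, Int.add_mul_emod_self_left]
      exact Int.emod_eq_of_lt (by omega) (by omega)
    have e2 : (m + 1) / (n : ℤ) = m / n := by
      rw [hm1, Int.add_mul_ediv_left _ _ hne,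
        Int.ediv_eq_zero_of_lt (by omega) (by omega), zero_add]
    have hle : idx hn m ≤ idx hn (m + 1) := by
      rw [Fin.le_def]; simp only [idx, e1]; omega
    simp only [Xz, e2]
    have := hmono hle
    linarith

noncomputable def Mset (hn : 0 < n) (t : ℤ) : Finset ℤ :=
  (Finset.Icc (t - n + 1) (t + n - 1)).filter fun m => |Xz p x hn m - Xz p x hn t| ≤ 1

section
variable (hn : 0 < n) (hp : 2 < p) (hmono : Monotone x)
  (hspan : x ⟨n - 1, by omega⟩ ≤ x ⟨0, hn⟩ + p)

include hn hp hmono hspan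

lemma mem_Mset (m t : ℤ) :
    m ∈ Mset p x hn t ↔ |Xz p x hn m - Xz p x hn t| ≤ 1 := by
  have hXm := Xz_mono p x hn hmono hspan
  simp only [Mset, Finset.mem_filter, Finset.mem_Icc]
  constructor
  · rintro ⟨-, h⟩; exact h
  · intro h
    rw [abs_le] at h
    refine ⟨⟨?_, ?_⟩, by rw [abs_le]; exact h⟩
    · by_contra hlt
      push_neg at hlt
      have hm : m ≤ t - n := by omega
      have h1 : Xz p x hn m ≤ Xz p x hn (t - n) := hXm hm
      have h2 : Xz p x hn (t - n) + p = Xz p x hn t := by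
        rw [← Xz_add_n p x hn (t - n)]; ring_nf
      linarith [h.1, hp]
    · by_contra hlt
      push_neg at hlt
      have hm : t + n ≤ m := by omega
      have h1 : Xz p x hn (t + n) ≤ Xz p x hn m := hXm hm
      have h2 : Xz p x hn (t + n) = Xz p x hn t + p := Xz_add_n p x hn t
      linarith [h.2, hp]

lemma self_mem_Mset (t : ℤ) : t ∈ Mset p x hn t := by
  rw [mem_Mset p x hn hp hmono hspan]
  simp

lemma Mset_nonempty (t : ℤ) : (Mset p x hn t).Nonempty :=
  ⟨t, self_mem_Mset p x hn hp hmono hspan t⟩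

lemma Mset_eq_Icc (t : ℤ) :
    Mset p x hn t =
      Finset.Icc ((Mset p x hn t).min' (Mset_nonempty p x hn hp hmono hspan t))
        ((Mset p x hn t).max' (Mset_nonempty p x hn hp hmono hspan t)) := by
  have hXm := Xz_mono p x hn hmono hspan
  set nem := Mset_nonempty p x hn hp hmono hspan t
  ext m
  simp only [Finset.mem_Icc]
  constructor
  · intro hm
    exact ⟨Finset.min'_le _ _ hm, Finset.le_max' _ _ hm⟩
  · rintro ⟨h1, h2⟩
    have ha := (mem_Mset p x hn hp hmono hspan _ t).1 ((Mset p x hn t).min'_mem nem)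
    have hb := (mem_Mset p x hn hp hmono hspan _ t).1 ((Mset p x hn t).max'_mem nem)
    rw [abs_le] at ha hb
    rw [mem_Mset p x hn hp hmono hspan, abs_le]
    exact ⟨by linarith [hXm h1], by linarith [hXm h2]⟩

lemma Mset_shift (t : ℤ) :
    Mset p x hn (t + n) = Finset.image (· + (n : ℤ)) (Mset p x hn t) := by
  ext m
  constructor
  · intro h
    rw [mem_Mset p x hn hp hmono hspan] at h
    rw [Finset.mem_image]
    refine ⟨m - n, ?_, by ring⟩
    rw [mem_Mset p x hn hp hmono hspan]
    have e1 : Xz p x hn m = Xz p x hn (m - n) + p := by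
      rw [← Xz_add_n p x hn (m - n)]; ring_nf
    have e2 : Xz p x hn (t + n) = Xz p x hn t + p := Xz_add_n p x hn t
    have e3 : Xz p x hn (m - n) - Xz p x hn t = Xz p x hn m - Xz p x hn (t + n) := by
      rw [e1, e2]; ring
    rwa [e3]
  · intro h
    rw [Finset.mem_image] at h
    obtain ⟨a, ha, rfl⟩ := h
    rw [mem_Mset p x hn hp hmono hspan] at ha
    rw [mem_Mset p x hn hp hmono hspan]
    have e1 : Xz p x hn (a + n) = Xz p x hn a + p := Xz_add_n p x hn a
    have e2 : Xz p x hn (t + n) = Xz p x hn t + p := Xz_add_n p x hn t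
    have e3 : Xz p x hn (a + n) - Xz p x hn (t + n) = Xz p x hn a - Xz p x hn t := by
      rw [e1, e2]; ring
    rwa [e3]

end

noncomputable def avg (f : ℤ → ℝ) (s : Finset ℤ) : ℝ := (∑ m ∈ s, f m) / s.card

lemma avg_step_right (f : ℤ → ℝ) (hf : Monotone f) {a b : ℤ} (hab : a ≤ b) :
    avg f (Finset.Icc a b) ≤ avg f (Finset.Icc a (b + 1)) := by
  have hins : Finset.Icc a (b + 1) = insert (b + 1) (Finset.Icc a b) := by
    ext m; simp only [Finset.mem_Icc, Finset.mem_insert]; omega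
  have hnm : (b + 1) ∉ Finset.Icc a b := by simp [Finset.mem_Icc]
  have hk : 0 < (Finset.Icc a b).card :=
    Finset.card_pos.2 ⟨a, by simp [Finset.mem_Icc, hab]⟩
  have hSle : ∑ m ∈ Finset.Icc a b, f m ≤ (Finset.Icc a b).card * f (b + 1) := by
    calc ∑ m ∈ Finset.Icc a b, f m
        ≤ ∑ _m ∈ Finset.Icc a b, f (b + 1) :=
          Finset.sum_le_sum fun m hm => hf (by
            simp only [Finset.mem_Icc] at hm; omega)
      _ = (Finset.Icc a b).card * f (b + 1) := by
          rw [Finset.sum_const, nsmul_eq_mul]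
  rw [avg, avg, hins, Finset.sum_insert hnm, Finset.card_insert_of_notMem hnm]
  rw [div_le_div_iff₀ (by exact_mod_cast hk) (by positivity)]
  push_cast
  nlinarith [hSle, hk]

lemma avg_step_left (f : ℤ → ℝ) (hf : Monotone f) {a b : ℤ} (hab : a + 1 ≤ b) :
    avg f (Finset.Icc a b) ≤ avg f (Finset.Icc (a + 1) b) := by
  have hins : Finset.Icc a b = insert a (Finset.Icc (a + 1) b) := by
    ext m; simp only [Finset.mem_Icc, Finset.mem_insert]; omega
  have hnm : a ∉ Finset.Icc (a + 1) b := by simp [Finset.mem_Icc]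
  have hk : 0 < (Finset.Icc (a + 1) b).card :=
    Finset.card_pos.2 ⟨a + 1, by simp [Finset.mem_Icc, hab]⟩
  have hSle : (Finset.Icc (a + 1) b).card * f a ≤ ∑ m ∈ Finset.Icc (a + 1) b, f m := by
    calc ((Finset.Icc (a + 1) b).card : ℝ) * f a
        = ∑ _m ∈ Finset.Icc (a + 1) b, f a := by rw [Finset.sum_const, nsmul_eq_mul]
      _ ≤ ∑ m ∈ Finset.Icc (a + 1) b, f m :=
          Finset.sum_le_sum fun m hm => hf (by
            simp only [Finset.mem_Icc] at hm; omega)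
  rw [avg, avg, hins, Finset.sum_insert hnm, Finset.card_insert_of_notMem hnm]
  rw [div_le_div_iff₀ (by positivity) (by exact_mod_cast hk)]
  push_cast
  nlinarith [hSle, hk]

lemma avg_Icc_right (f : ℤ → ℝ) (hf : Monotone f) {a b1 b2 : ℤ}
    (h1 : a ≤ b1) (hb : b1 ≤ b2) :
    avg f (Finset.Icc a b1) ≤ avg f (Finset.Icc a b2) := by
  exact Int.le_induction (motive := fun b _ => avg f (Finset.Icc a b1) ≤ avg f (Finset.Icc a b))
    (le_refl _) (fun k hk ih => ih.trans (avg_step_right f hf (h1.trans hk))) b2 hb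

lemma avg_Icc_left (f : ℤ → ℝ) (hf : Monotone f) {a1 a2 b : ℤ}
    (ha : a1 ≤ a2) (h2 : a2 ≤ b) :
    avg f (Finset.Icc a1 b) ≤ avg f (Finset.Icc a2 b) := by
  have H : ∀ a, a1 ≤ a → a ≤ b → avg f (Finset.Icc a1 b) ≤ avg f (Finset.Icc a b) :=
    Int.le_induction (motive := fun a _ => a ≤ b → avg f (Finset.Icc a1 b) ≤ avg f (Finset.Icc a b))
      (fun _ => le_refl _)
      (fun k _hk ih hkb => (ih (by omega)).trans (avg_step_left f hf hkb))
  exact H a2 ha h2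

lemma avg_Icc_mono (f : ℤ → ℝ) (hf : Monotone f) {a1 b1 a2 b2 : ℤ}
    (ha : a1 ≤ a2) (hb : b1 ≤ b2) (h1 : a1 ≤ b1) (h2 : a2 ≤ b2) :
    avg f (Finset.Icc a1 b1) ≤ avg f (Finset.Icc a2 b2) :=
  (avg_Icc_right f hf h1 hb).trans (avg_Icc_left f hf ha h2)


noncomputable def U (hn : 0 < n) (t : ℤ) : ℝ := avg (Xz p x hn) (Mset p x hn t)

section
variable (hn : 0 < n) (hp : 2 < p) (hmono : Monotone x)
  (hspan : x ⟨n - 1, by omega⟩ ≤ x ⟨0, hn⟩ + p)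

include hn hp hmono hspan

lemma U_mono : Monotone (U p x hn) := by
  intro s t hst
  have hXm := Xz_mono p x hn hmono hspan
  have nes := Mset_nonempty p x hn hp hmono hspan s
  have net := Mset_nonempty p x hn hp hmono hspan t
  set a1 := (Mset p x hn s).min' nes with ha1
  set b1 := (Mset p x hn s).max' nes with hb1
  set a2 := (Mset p x hn t).min' net with ha2
  set b2 := (Mset p x hn t).max' net with hb2
  have ha1s : a1 ≤ s := Finset.min'_le _ _ (self_mem_Mset p x hn hp hmono hspan s)
  have hsb1 : s ≤ b1 := Finset.le_max' _ _ (self_mem_Mset p x hn hp hmono hspan s)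
  have ha2t : a2 ≤ t := Finset.min'_le _ _ (self_mem_Mset p x hn hp hmono hspan t)
  have htb2 : t ≤ b2 := Finset.le_max' _ _ (self_mem_Mset p x hn hp hmono hspan t)
  have hA1 := (mem_Mset p x hn hp hmono hspan a1 s).1 ((Mset p x hn s).min'_mem nes)
  have hB1 := (mem_Mset p x hn hp hmono hspan b1 s).1 ((Mset p x hn s).max'_mem nes)
  have hA2 := (mem_Mset p x hn hp hmono hspan a2 t).1 ((Mset p x hn t).min'_mem net)
  have hB2 := (mem_Mset p x hn hp hmono hspan b2 t).1 ((Mset p x hn t).max'_mem net)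
  rw [abs_le] at hA1 hB1 hA2 hB2
  have hXst : Xz p x hn s ≤ Xz p x hn t := hXm hst
  have ha : a1 ≤ a2 := by
    by_contra hcon
    push_neg at hcon
    have hmem : a2 ∈ Mset p x hn s := by
      rw [mem_Mset p x hn hp hmono hspan, abs_le]
      have h1 : Xz p x hn a2 ≤ Xz p x hn a1 := hXm hcon.le
      constructor <;> [linarith [hA2.1]; linarith [hA1.2]]
    exact absurd (Finset.min'_le _ _ hmem) (by omega)
  have hb : b1 ≤ b2 := by
    by_contra hcon
    push_neg at hcon
    have hmem : b1 ∈ Mset p x hn t := by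
      rw [mem_Mset p x hn hp hmono hspan, abs_le]
      have h1 : Xz p x hn t ≤ Xz p x hn b1 := hXm (le_trans htb2 hcon.le)
      constructor <;> [linarith; linarith [hB1.2]]
    exact absurd (Finset.le_max' _ _ hmem) (by omega)
  rw [U, U, Mset_eq_Icc p x hn hp hmono hspan s, Mset_eq_Icc p x hn hp hmono hspan t]
  exact avg_Icc_mono (Xz p x hn) hXm ha hb (le_trans ha1s hsb1) (le_trans ha2t htb2)

lemma U_shift (t : ℤ) : U p x hn (t + n) = U p x hn t + p := by
  have hinj : Set.InjOn (· + (n : ℤ)) (Mset p x hn t) := fun a _ b _ h => by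
    simpa using h
  have hc : 0 < (Mset p x hn t).card :=
    Finset.card_pos.2 (Mset_nonempty p x hn hp hmono hspan t)
  rw [U, U, avg, avg, Mset_shift p x hn hp hmono hspan t,
    Finset.sum_image hinj, Finset.card_image_of_injOn hinj]
  have hsum : ∑ m ∈ Mset p x hn t, Xz p x hn (m + n)
      = (∑ m ∈ Mset p x hn t, Xz p x hn m) + (Mset p x hn t).card * p := by
    calc ∑ m ∈ Mset p x hn t, Xz p x hn (m + n)
        = ∑ m ∈ Mset p x hn t, (Xz p x hn m + p) :=
          Finset.sum_congr rfl fun m _ => Xz_add_n p x hn m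
      _ = (∑ m ∈ Mset p x hn t, Xz p x hn m) + (Mset p x hn t).card * p := by
          rw [Finset.sum_add_distrib, Finset.sum_const, nsmul_eq_mul]
  rw [hsum]
  have hcne : ((Mset p x hn t).card : ℝ) ≠ 0 := by
    exact_mod_cast hc.ne'
  field_simp

end

section
variable (hn : 0 < n) (hp : 2 < p) (hmono : Monotone x)
  (hspan : x ⟨n - 1, by omega⟩ ≤ x ⟨0, hn⟩ + p)

include hp in
lemma nearestLift_Xz (i : Fin n) (m : ℤ)
    (hm : |Xz p x hn m - x i| ≤ 1) :
    nearestLift p (x i) (x (idx hn m)) = Xz p x hn m := by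
  have hp0 : (0 : ℝ) < p := by linarith
  rw [abs_le] at hm
  exact nearestLift_eq_of hp0 (m / (n : ℤ)) rfl (by linarith [hm.1]) (by linarith [hm.2])

include hn hp hmono hspan

lemma hkUpdate_eq_U (i : Fin n) : hkUpdate p x i = U p x hn (i : ℤ) := by
  have hp0 : (0 : ℝ) < p := by linarith
  have hne : (n : ℤ) ≠ 0 := by exact_mod_cast hn.ne'
  have hXm := Xz_mono p x hn hmono hspan
  have key : ∀ m ∈ Mset p x hn (i : ℤ), |Xz p x hn m - x i| ≤ 1 := by
    intro m hm
    have := (mem_Mset p x hn hp hmono hspan m (i : ℤ)).1 hm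
    rwa [Xz_coe] at this
  have hmapsto : ∀ m (hm : m ∈ Mset p x hn (i : ℤ)), idx hn m ∈ hkNbhd p x i := by
    intro m hm
    simp only [hkNbhd, Finset.mem_filter, Finset.mem_univ, true_and]
    rw [nearestLift_Xz p x hn hp i m (key m hm)]
    exact key m hm
  have hinj : ∀ (m1 : ℤ) (hm1 : m1 ∈ Mset p x hn (i : ℤ)) (m2 : ℤ)
      (hm2 : m2 ∈ Mset p x hn (i : ℤ)), idx hn m1 = idx hn m2 → m1 = m2 := by
    intro m1 hm1 m2 hm2 he
    have h1 := key _ hm1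
    have h2 := key _ hm2
    rw [abs_le] at h1 h2
    unfold idx at he
    rw [Fin.mk.injEq] at he
    have n1 : 0 ≤ m1 % (n : ℤ) := Int.emod_nonneg _ hne
    have n2 : 0 ≤ m2 % (n : ℤ) := Int.emod_nonneg _ hne
    have hr : m1 % (n : ℤ) = m2 % (n : ℤ) := by
      have hcast : (((m1 % (n : ℤ)).toNat : ℤ)) = ((m2 % (n : ℤ)).toNat : ℤ) := by
        exact_mod_cast congrArg (fun a : ℕ => (a : ℤ)) he
      rwa [Int.toNat_of_nonneg n1, Int.toNat_of_nonneg n2] at hcast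
    obtain ⟨d, hd⟩ : (n : ℤ) ∣ m2 - m1 := Int.ModEq.dvd hr
    rcases lt_trichotomy d 0 with hdlt | hdeq | hdgt
    · exfalso
      have hle : m2 + n ≤ m1 := by nlinarith [show (0:ℤ) < (n:ℤ) from by exact_mod_cast hn]
      have := hXm hle
      rw [Xz_add_n] at this
      linarith
    · rw [hdeq, mul_zero] at hd; omega
    · exfalso
      have hle : m1 + n ≤ m2 := by nlinarith [show (0:ℤ) < (n:ℤ) from by exact_mod_cast hn]
      have := hXm hle
      rw [Xz_add_n] at this
      linarith
  have hsurj : ∀ j ∈ hkNbhd p x i, ∃ m, ∃ hm : m ∈ Mset p x hn (i : ℤ), idx hn m = j := by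
    intro j hj
    simp only [hkNbhd, Finset.mem_filter, Finset.mem_univ, true_and] at hj
    obtain ⟨k, e, _, _⟩ := nearestLift_spec hp0 (x i) (x j)
    have hidx : idx hn ((j : ℤ) + (n : ℤ) * k) = j := by
      apply Fin.ext
      simp only [idx]
      rw [Int.add_mul_emod_self_left,
        Int.emod_eq_of_lt (Int.natCast_nonneg _) (by exact_mod_cast j.isLt)]
      simp
    have hdiv : ((j : ℤ) + (n : ℤ) * k) / (n : ℤ) = k := by
      rw [Int.add_mul_ediv_left _ _ hne,
        Int.ediv_eq_zero_of_lt (Int.natCast_nonneg _) (by exact_mod_cast j.isLt), zero_add]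
    have eX : Xz p x hn ((j : ℤ) + (n : ℤ) * k) = x j + (k : ℝ) * p := by
      rw [Xz, hidx, hdiv]
    refine ⟨(j : ℤ) + (n : ℤ) * k, ?_, hidx⟩
    rw [mem_Mset p x hn hp hmono hspan, Xz_coe, eX, ← e]
    exact hj
  have hsum : ∑ m ∈ Mset p x hn (i : ℤ), Xz p x hn m
      = ∑ j ∈ hkNbhd p x i, nearestLift p (x i) (x j) :=
    Finset.sum_bij (fun m _ => idx hn m) hmapsto hinj hsurj
      (fun m hm => (nearestLift_Xz p x hn hp i m (key m hm)).symm)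
  have hcard : (Mset p x hn (i : ℤ)).card = (hkNbhd p x i).card :=
    Finset.card_bij (fun m _ => idx hn m) hmapsto hinj hsurj
  rw [hkUpdate, U, avg, ← hsum, ← hcard]

end
end HKAux

/-- The HK update on a circle of perimeter `p > 2` preserves the (weak)
anticlockwise cyclic order of the agents. -/
theorem stmt_16 (n : ℕ) (hn : 1 ≤ n) (p : ℝ) (hp : 2 < p)
    (x : Fin n → ℝ) (hmono : Monotone x)
    (hspan : x ⟨n - 1, by omega⟩ < x ⟨0, by omega⟩ + p) :
    ∃ y : Fin n → ℝ,
      (∀ i, (y i : AddCircle p) = ((hkUpdate p x i : ℝ) : AddCircle p)) ∧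
      Monotone y ∧
      y ⟨n - 1, by omega⟩ ≤ y ⟨0, by omega⟩ + p := by
  have hn0 : 0 < n := hn
  have hspan' : x ⟨n - 1, by omega⟩ ≤ x ⟨0, hn0⟩ + p := le_of_lt hspan
  refine ⟨fun i => HKAux.U p x hn0 (i : ℤ), ?_, ?_, ?_⟩
  · intro i
    rw [HKAux.hkUpdate_eq_U p x hn0 hp hmono hspan']
  · intro i j hij
    exact HKAux.U_mono p x hn0 hp hmono hspan' (by exact_mod_cast (Fin.le_def.1 hij))
  · have e1 : (((⟨n - 1, by omega⟩ : Fin n) : ℤ)) = (n : ℤ) - 1 := by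
      simp only [Fin.val_mk]
      omega
    have e0 : (((⟨0, by omega⟩ : Fin n) : ℤ)) = 0 := by simp
    simp only [e1, e0]
    have h1 : HKAux.U p x hn0 ((n : ℤ) - 1) ≤ HKAux.U p x hn0 ((0 : ℤ) + (n : ℤ)) :=
      HKAux.U_mono p x hn0 hp hmono hspan' (by omega)
    rw [HKAux.U_shift p x hn0 hp hmono hspan'] at h1
    exact h1
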